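/- Suppose f : [0,∞) → ℝ is locally bounded and there exist constants C, D > 0 such that for all t ≥ 0, e^{−f(t)} ≤ C√(1+t) − D·f(t) + C·sup_{s ∈ [0,t]} e^{−f(s)}/√(1+s). Then there exists a constant K such that f(t) ≥ −(1/2)log(1+t) − K for all t ≥ 0. -/

import Mathlib

/-- Recursive lower-bound lemma: if f is locally bounded on [0,∞) and
e^{−f(t)} ≤ C√(1+t) − D·f(t) + C·sup_{s∈[0,t]} e^{−f(s)}/√(1+s), then
f(t) ≥ −(1/2)log(1+t) − K for some constant K. -/
theorem stmt7 (f : ℝ → ℝ)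
    (hloc : ∀ T : ℝ, BddAbove (f '' Set.Icc 0 T) ∧ BddBelow (f '' Set.Icc 0 T))
    (C D : ℝ) (hC : 0 < C) (hD : 0 < D)
    (hrec : ∀ t ≥ (0:ℝ),
      Real.exp (-f t) ≤ C * Real.sqrt (1 + t) - D * f t
        + C * sSup ((fun s => Real.exp (-f s) / Real.sqrt (1 + s)) '' Set.Icc 0 t)) :
    ∃ K : ℝ, ∀ t ≥ (0:ℝ), f t ≥ -(1/2) * Real.log (1 + t) - K := by
  set g : ℝ → ℝ := fun s => Real.exp (-f s) / Real.sqrt (1 + s) with hg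
  set S : ℝ → ℝ := fun t => sSup (g '' Set.Icc 0 t) with hSdef
  have hsqrt1 : ∀ t : ℝ, 0 ≤ t → (1:ℝ) ≤ Real.sqrt (1 + t) := by
    intro t ht
    have h := Real.sqrt_le_sqrt (show (1:ℝ) ≤ 1 + t by linarith)
    simpa using h
  have hsqrtpos : ∀ t : ℝ, 0 ≤ t → (0:ℝ) < Real.sqrt (1 + t) := fun t ht =>
    lt_of_lt_of_le one_pos (hsqrt1 t ht)
  have hne : ∀ t : ℝ, 0 ≤ t → (g '' Set.Icc 0 t).Nonempty := by
    intro t ht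
    exact ⟨g 0, ⟨0, ⟨le_refl 0, ht⟩, rfl⟩⟩
  have hbdd : ∀ t : ℝ, 0 ≤ t → BddAbove (g '' Set.Icc 0 t) := by
    intro t ht
    obtain ⟨m, hm⟩ := (hloc t).2
    refine ⟨Real.exp (-m), ?_⟩
    rintro y ⟨s, hs, rfl⟩
    have hfm : m ≤ f s := hm ⟨s, hs, rfl⟩
    have h1 : Real.exp (-f s) ≤ Real.exp (-m) := Real.exp_le_exp.mpr (by linarith)
    have h2 : g s ≤ Real.exp (-f s) :=
      div_le_self (Real.exp_nonneg _) (hsqrt1 s hs.1)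
    linarith
  have hmono : ∀ t₁ t₂ : ℝ, 0 ≤ t₁ → t₁ ≤ t₂ → S t₁ ≤ S t₂ := by
    intro t₁ t₂ h0 h12
    exact csSup_le_csSup (hbdd t₂ (le_trans h0 h12)) (hne t₁ h0)
      (Set.image_mono (Set.Icc_subset_Icc le_rfl h12))
  have hgS : ∀ t : ℝ, 0 ≤ t → g t ≤ S t := by
    intro t ht
    exact le_csSup (hbdd t ht) ⟨t, ⟨ht, le_rfl⟩, rfl⟩
  have hSpos : ∀ t : ℝ, 0 ≤ t → 0 < S t := by
    intro t ht
    have h0 : (0:ℝ) < g 0 := by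
      have : Real.sqrt (1 + 0) = 1 := by norm_num
      simp only [hg, this]
      positivity
    have : g 0 ≤ S t := le_csSup (hbdd t ht) ⟨0, ⟨le_refl 0, ht⟩, rfl⟩
    linarith
  -- logarithmic absorption: D * (-x) ≤ exp(-x)/2 + D * c
  set c : ℝ := |Real.log (2 * D)| with hc
  have hc0 : 0 ≤ c := abs_nonneg _
  have hlog : ∀ x : ℝ, D * (-x) ≤ Real.exp (-x) / 2 + D * c := by
    intro x
    have hp : 0 < Real.exp (-x) := Real.exp_pos _
    have h2D : 0 < 2 * D := by linarith
    have h1 : Real.log ((2 * D)⁻¹ * Real.exp (-x)) ≤ (2 * D)⁻¹ * Real.exp (-x) - 1 :=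
      Real.log_le_sub_one_of_pos (by positivity)
    rw [Real.log_mul (by positivity) (ne_of_gt hp), Real.log_inv, Real.log_exp] at h1
    have hlc : Real.log (2 * D) ≤ c := le_abs_self _
    have hkey : D * (-x) ≤ D * ((2 * D)⁻¹ * Real.exp (-x) - 1 + Real.log (2 * D)) :=
      mul_le_mul_of_nonneg_left (by linarith) hD.le
    have hDinv : D * ((2 * D)⁻¹ * Real.exp (-x)) = Real.exp (-x) / 2 := by
      field_simp
    have hlc2 : D * Real.log (2 * D) ≤ D * c := mul_le_mul_of_nonneg_left hlc hD.le
    nlinarith [hD.le]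
  set A : ℝ := 2 * C + 2 * D * c with hA
  have hApos : 0 < A := by positivity
  -- step 1 : g t ≤ A + 2C S t / sqrt(1+t)
  have step1 : ∀ t : ℝ, 0 ≤ t → g t ≤ A + 2 * C * S t / Real.sqrt (1 + t) := by
    intro t ht
    have hr := hrec t ht
    have habs := hlog (f t)
    have hsq := hsqrt1 t ht
    have hsp := hsqrtpos t ht
    have hDc : D * c ≤ D * c * Real.sqrt (1 + t) := by
      nlinarith [mul_nonneg hD.le hc0]
    -- exp(-f t) ≤ A * sqrt(1+t) + 2C S t
    have hmain : Real.exp (-f t) ≤ A * Real.sqrt (1 + t) + 2 * C * S t := by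
      nlinarith [hr, habs, hDc]
    rw [hg]
    simp only
    rw [div_le_iff₀ hsp, add_mul, div_mul_cancel₀ _ (ne_of_gt hsp)]
    linarith
  set T₀ : ℝ := 16 * C ^ 2 with hT₀def
  have hT₀ : (0:ℝ) ≤ T₀ := by positivity
  -- step 2 : for t ≥ T₀, g t ≤ A + S t / 2
  have step2 : ∀ t : ℝ, T₀ ≤ t → g t ≤ A + S t / 2 := by
    intro t ht
    have ht0 : (0:ℝ) ≤ t := le_trans hT₀ ht
    have h4C : (4 * C) ≤ Real.sqrt (1 + t) := by
      have : Real.sqrt ((4 * C) ^ 2) ≤ Real.sqrt (1 + t) :=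
        Real.sqrt_le_sqrt (by nlinarith)
      rwa [Real.sqrt_sq (by positivity)] at this
    have h4Cpos : (0:ℝ) < 4 * C := by positivity
    have hS0 : 0 < S t := hSpos t ht0
    have h1 : 2 * C * S t / Real.sqrt (1 + t) ≤ 2 * C * S t / (4 * C) :=
      div_le_div_of_nonneg_left (by positivity) h4Cpos h4C
    have h2 : 2 * C * S t / (4 * C) = S t / 2 := by
      field_simp; ring
    have := step1 t ht0
    linarith [h1, h2 ▸ h1]
  -- the sup is bounded by B
  set B : ℝ := max (S T₀) (2 * A) with hB
  have hSB : ∀ t : ℝ, 0 ≤ t → S t ≤ B := by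
    intro t ht
    have hmax : S t ≤ max (S T₀) (A + S t / 2) := by
      apply csSup_le (hne t ht)
      rintro y ⟨s, ⟨hs0, hst⟩, rfl⟩
      rcases le_total s T₀ with h | h
      · exact le_max_of_le_left (le_csSup (hbdd T₀ hT₀) ⟨s, ⟨hs0, h⟩, rfl⟩)
      · have h1 := step2 s h
        have h2 : S s ≤ S t := hmono s t hs0 hst
        exact le_max_of_le_right (by linarith)
    rcases max_choice (S T₀) (A + S t / 2) with h | h
    · rw [h] at hmax
      exact le_trans hmax (le_max_left _ _)
    · rw [h] at hmax
      have : S t ≤ 2 * A := by linarith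
      exact le_trans this (le_max_right _ _)
  have hBpos : 0 < B := lt_of_lt_of_le (by linarith) (le_max_right (S T₀) (2 * A))
  refine ⟨Real.log B, ?_⟩
  intro t ht
  have hsp := hsqrtpos t ht
  have h1 : Real.exp (-f t) ≤ B * Real.sqrt (1 + t) := by
    have h2 : g t ≤ B := le_trans (hgS t ht) (hSB t ht)
    rw [hg] at h2
    simp only at h2
    rw [div_le_iff₀ hsp] at h2
    linarith
  have h3 : -f t ≤ Real.log (B * Real.sqrt (1 + t)) :=
    (Real.le_log_iff_exp_le (by positivity)).mpr h1
  rw [Real.log_mul (ne_of_gt hBpos) (ne_of_gt hsp), Real.log_sqrt (by linarith)] at h3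
  linarith
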